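/- If the greedy queue bounds q_i = max { r : Q(r) ≤ S_i } (with S_i = Σ_{j≤i} B_j) satisfy additionally that the maximal single-rank probability δ_+ = max_r p(r) obeys δ_+ ≤ B_i for all i, then for every queue i the assigned mass m_i = Q(q_i) − Q(q_{i−1}) satisfies m_i ≤ B_i + δ_+, i.e., each queue overflows by at most one rank's worth of mass. -/

import Mathlib

/-- With greedy bounds `q_i = max { r : Q r ≤ S_i }`
(`S_i = ∑_{j<i} B j` in 0-indexed form, `g i = q_i + 1`, `g 0 = 0`,
`Q(q_i) = ∑_{j < g i} p j`), if the maximal single-rank probability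
`δ₊ = max_r p r` obeys `δ₊ ≤ B_i` for all queues `i`, then every queue's
assigned mass satisfies `m_i = Q(q_i) − Q(q_{i−1}) ≤ B_i + δ₊`:
each queue overflows by at most one rank's worth of mass. -/
theorem stmt_8 (R n : ℕ) (p : ℕ → ℝ)
    (hp : ∀ r, 0 ≤ p r)
    (hsum : ∑ i ∈ Finset.range (R + 1), p i = 1)
    (δ : ℝ) (hδub : ∀ r ≤ R, p r ≤ δ) (hδmem : ∃ r ≤ R, p r = δ)
    (B : ℕ → ℝ) (hB : ∀ j, 0 ≤ B j) (hδB : ∀ j < n, δ ≤ B j)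
    (g : ℕ → ℕ) (hg0 : g 0 = 0)
    (hgR : ∀ i, 1 ≤ i → i ≤ n → g i ≤ R + 1)
    (hgle : ∀ i, 1 ≤ i → i ≤ n →
      (∑ j ∈ Finset.range (g i), p j) ≤ ∑ j ∈ Finset.range i, B j)
    (hgmax : ∀ i, 1 ≤ i → i ≤ n → ∀ r ≤ R + 1,
      (∑ j ∈ Finset.range r, p j) ≤ (∑ j ∈ Finset.range i, B j) → r ≤ g i) :
    ∀ i, 1 ≤ i → i ≤ n →
      ((∑ j ∈ Finset.range (g i), p j) - ∑ j ∈ Finset.range (g (i - 1)), p j) ≤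
        B (i - 1) + δ := by
  obtain ⟨r0, hr0R, hr0⟩ := hδmem
  have hδ0 : 0 ≤ δ := hr0 ▸ hp r0
  intro i hi1 hin
  rcases eq_or_lt_of_le hi1 with h1 | h2
  · -- i = 1
    subst h1
    simp only [Nat.sub_self, hg0, Finset.range_zero, Finset.sum_empty, sub_zero]
    have := hgle 1 le_rfl hin
    simp only [Finset.range_one, Finset.sum_singleton] at this
    linarith
  · -- 2 ≤ i
    set k := i - 1 with hk
    have hk1 : 1 ≤ k := by omega
    have hkn : k ≤ n := by omega
    have hik : i = k + 1 := by omega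
    have hgkR : g k ≤ R + 1 := hgR k hk1 hkn
    rcases eq_or_lt_of_le hgkR with hfull | hlt
    · -- g k = R + 1, so Q(g k) = 1 ≥ Q(g i)
      have hQi : (∑ j ∈ Finset.range (g i), p j) ≤ 1 := by
        rw [← hsum]
        exact Finset.sum_le_sum_of_subset_of_nonneg
          (Finset.range_subset_range.2 (hgR i hi1 hin)) (fun j _ _ => hp j)
      have hQk : (∑ j ∈ Finset.range (g k), p j) = 1 := by rw [hfull, hsum]
      have hBk : 0 ≤ B k := hB k
      linarith
    · -- g k ≤ R
      have hgkR' : g k ≤ R := by omega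
      have hnot : ¬ ((∑ j ∈ Finset.range (g k + 1), p j) ≤
          ∑ j ∈ Finset.range k, B j) := by
        intro h
        have := hgmax k hk1 hkn (g k + 1) (by omega) h
        omega
      push_neg at hnot
      rw [Finset.sum_range_succ] at hnot
      have hQi : (∑ j ∈ Finset.range (g i), p j) ≤ ∑ j ∈ Finset.range i, B j :=
        hgle i hi1 hin
      rw [hik] at hQi
      rw [Finset.sum_range_succ] at hQi
      rw [show g i = g (k + 1) by rw [hik]]
      have hpgk : p (g k) ≤ δ := hδub (g k) hgkR'
      linarith
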